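/- Let R be an Artinian commutative ring and M a flat R-module. Then M is an Ohm-Rush R-module; that is, for every x ∈ M, one has x ∈ c(x)M, where c(x) denotes the intersection of all ideals I of R with x ∈ IM. -/

import Mathlib

section OhmRushDefs

variable {R S : Type*} [CommRing R] [CommRing S]

/-- The Ohm–Rush content of an element `s` of an `R`-algebra `S` (given by a ring
homomorphism `f : R →+* S`): the intersection of all ideals `I` of `R` with `s ∈ IS`. -/
def ORContent (f : R →+* S) (s : S) : Ideal R :=
  sInf {I : Ideal R | s ∈ Ideal.map f I}

/-- `S` is an Ohm–Rush `R`-algebra if every `s ∈ S` lies in the extension of its content. -/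
def IsOhmRushAlgebra (f : R →+* S) : Prop :=
  ∀ s : S, s ∈ Ideal.map f (ORContent f s)

/-- Flatness of a ring homomorphism. -/
def RingHomFlat (f : R →+* S) : Prop :=
  letI := f.toAlgebra; Module.Flat R S

/-- Faithful flatness of a ring homomorphism. -/
def RingHomFaithfullyFlat (f : R →+* S) : Prop :=
  letI := f.toAlgebra; Module.FaithfullyFlat R S

/-- Module-freeness of a ring homomorphism. -/
def RingHomFree (f : R →+* S) : Prop :=
  letI := f.toAlgebra; Module.Free R S

/-- Weak content algebra: Ohm–Rush and `√c(fg) = √(c(f)c(g))`. -/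
def IsWeakContentAlgebra (f : R →+* S) : Prop :=
  IsOhmRushAlgebra f ∧ ∀ s t : S,
    (ORContent f (s * t)).radical = (ORContent f s * ORContent f t).radical

/-- Semicontent algebra: faithfully flat Ohm–Rush, and for every multiplicative subset `W`
of `R`, if `c(s)R_W = R_W` then `c(st)R_W = c(t)R_W`. -/
def IsSemicontentAlgebra (f : R →+* S) : Prop :=
  IsOhmRushAlgebra f ∧ RingHomFaithfullyFlat f ∧
    ∀ (W : Submonoid R) (s t : S),
      Ideal.map (algebraMap R (Localization W)) (ORContent f s) = ⊤ →
      Ideal.map (algebraMap R (Localization W)) (ORContent f (s * t)) =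
        Ideal.map (algebraMap R (Localization W)) (ORContent f t)

/-- Content algebra: faithfully flat Ohm–Rush satisfying the Dedekind–Mertens type formula. -/
def IsContentAlgebra (f : R →+* S) : Prop :=
  IsOhmRushAlgebra f ∧ RingHomFaithfullyFlat f ∧
    ∀ s t : S, ∃ n : ℕ, 0 < n ∧
      ORContent f s ^ n * ORContent f t = ORContent f s ^ (n - 1) * ORContent f (s * t)

/-- A ring homomorphism satisfies INC if comparable primes of `S` with the same
contraction to `R` are equal. -/
def SatisfiesINC (f : R →+* S) : Prop :=
  ∀ Q Q' : Ideal S, Q.IsPrime → Q'.IsPrime → Q ≤ Q' →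
    Ideal.comap f Q = Ideal.comap f Q' → Q = Q'

/-- A valuation domain: a domain whose divisibility is total. -/
def IsValuationDomain (A : Type*) [CommRing A] : Prop :=
  IsDomain A ∧ ∀ a b : A, ∃ c : A, a * c = b ∨ b * c = a

/-- A Prüfer domain: a domain whose localization at every maximal ideal is a
valuation domain. -/
def IsPruferDomain (A : Type*) [CommRing A] : Prop :=
  IsDomain A ∧ ∀ (P : Ideal A) (hP : P.IsMaximal),
    haveI := hP.isPrime
    IsValuationDomain (Localization.AtPrime P)

end OhmRushDefs


open TensorProduct

lemma flat_smul_inf {R M : Type*} [CommRing R] [AddCommGroup M] [Module R M]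
    [Module.Flat R M] (I J : Ideal R) {x : M}
    (hI : x ∈ I • (⊤ : Submodule R M)) (hJ : x ∈ J • (⊤ : Submodule R M)) :
    x ∈ (I ⊓ J) • (⊤ : Submodule R M) := by
  set f : (R ⧸ (I ⊓ J)) →ₗ[R] (R ⧸ I) × (R ⧸ J) :=
    Submodule.liftQ (I ⊓ J : Ideal R) ((I : Submodule R R).mkQ.prod (J : Submodule R R).mkQ)
      (by
        intro r hr
        simp only [LinearMap.mem_ker, LinearMap.prod_apply, Function.prod, Submodule.mkQ_apply,
          Prod.mk_eq_zero, Submodule.Quotient.mk_eq_zero]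
        exact ⟨hr.1, hr.2⟩) with hf
  have hfinj : Function.Injective f := by
    rw [← LinearMap.ker_eq_bot, hf, Submodule.ker_liftQ_eq_bot]
    rw [LinearMap.ker_prod, Submodule.ker_mkQ, Submodule.ker_mkQ]
  have hginj : Function.Injective (f.lTensor M) :=
    Module.Flat.lTensor_preserves_injective_linearMap f hfinj
  have h1 : (x ⊗ₜ[R] (Submodule.Quotient.mk 1 : R ⧸ (I : Submodule R R))) = 0 := by
    have := (tensorQuotEquivQuotSMul M I).injective (a₁ := x ⊗ₜ[R] Ideal.Quotient.mk I 1)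
      (a₂ := 0)
    simp only [map_zero, tensorQuotEquivQuotSMul_tmul_mk, one_smul] at this
    exact this ((Submodule.Quotient.mk_eq_zero _).2 hI)
  have h2 : (x ⊗ₜ[R] (Submodule.Quotient.mk 1 : R ⧸ (J : Submodule R R))) = 0 := by
    have := (tensorQuotEquivQuotSMul M J).injective (a₁ := x ⊗ₜ[R] Ideal.Quotient.mk J 1)
      (a₂ := 0)
    simp only [map_zero, tensorQuotEquivQuotSMul_tmul_mk, one_smul] at this
    exact this ((Submodule.Quotient.mk_eq_zero _).2 hJ)
  have key : (x ⊗ₜ[R] (Submodule.Quotient.mk 1 : R ⧸ (I ⊓ J : Ideal R))) = 0 := by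
    apply hginj
    have : f.lTensor M (x ⊗ₜ[R] Submodule.Quotient.mk 1) =
        x ⊗ₜ[R] (f (Submodule.Quotient.mk 1)) := rfl
    rw [this, map_zero]
    have hfv : f (Submodule.Quotient.mk 1) =
        ((Submodule.Quotient.mk 1 : R ⧸ (I : Submodule R R)),
         (Submodule.Quotient.mk 1 : R ⧸ (J : Submodule R R))) := rfl
    rw [hfv]
    have : ((Submodule.Quotient.mk 1 : R ⧸ (I : Submodule R R)),
         (Submodule.Quotient.mk 1 : R ⧸ (J : Submodule R R))) =
        (Submodule.Quotient.mk 1, 0) + (0, Submodule.Quotient.mk 1) := by simp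
    rw [this, tmul_add]
    have e1 : x ⊗ₜ[R] ((Submodule.Quotient.mk 1 : R ⧸ (I : Submodule R R)), (0 : R ⧸ (J : Submodule R R))) =
        (LinearMap.inl R _ _).lTensor M (x ⊗ₜ[R] Submodule.Quotient.mk 1) := rfl
    have e2 : x ⊗ₜ[R] ((0 : R ⧸ (I : Submodule R R)), (Submodule.Quotient.mk 1 : R ⧸ (J : Submodule R R))) =
        (LinearMap.inr R _ _).lTensor M (x ⊗ₜ[R] Submodule.Quotient.mk 1) := rfl
    rw [e1, e2, h1, h2, map_zero, map_zero, add_zero]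
  have key' : (x ⊗ₜ[R] (Ideal.Quotient.mk (I ⊓ J) 1)) = 0 := key
  have h := congrArg (tensorQuotEquivQuotSMul M (I ⊓ J)) key'
  simp only [map_zero, tensorQuotEquivQuotSMul_tmul_mk, one_smul] at h
  exact (Submodule.Quotient.mk_eq_zero _).1 h

/-- A flat module over an Artinian commutative ring is Ohm–Rush. -/
theorem flat_module_ohmRush_of_artinian {R M : Type*} [CommRing R] [IsArtinianRing R]
    [AddCommGroup M] [Module R M] [Module.Flat R M] (x : M) :
    x ∈ (sInf {I : Ideal R | x ∈ I • (⊤ : Submodule R M)}) • (⊤ : Submodule R M) := by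
  set S : Set (Ideal R) := {I : Ideal R | x ∈ I • (⊤ : Submodule R M)} with hS
  have hne : S.Nonempty := ⟨⊤, by simp [hS]⟩
  obtain ⟨J, hJ, hJmin⟩ := IsArtinian.set_has_minimal S hne
  have hmin : ∀ I ∈ S, J ≤ I := by
    intro I hI
    have hIJ : I ⊓ J ∈ S := flat_smul_inf I J hI hJ
    have h' : ¬ (I ⊓ J < J) := hJmin _ hIJ
    have heq : I ⊓ J = J := by
      by_contra hne'
      exact h' (lt_of_le_of_ne inf_le_right hne')
    exact heq ▸ (inf_le_left : I ⊓ J ≤ I)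
  have : sInf S = J := le_antisymm (sInf_le hJ) (le_sInf hmin)
  rw [this]
  exact hJ
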